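/- Let G be a tripartite simple graph with vertex partition (A, B, C) such that A, B, C are independent sets, and let G'' be the graph obtained from G as follows: add all edges inside A, inside B, and inside C (turning each part into a clique), and add three new vertices r_A, r_B, r_C, where r_A is adjacent exactly to all vertices of A, r_B to all vertices of B, and r_C to all vertices of C. Then for every set U ⊆ A ∪ B ∪ C, U is a vertex cover of G if and only if no path of G'' − U connects two distinct vertices of {r_A, r_B, r_C}. -/
import Mathlib


/-- The graph `G''` built from a tripartite graph `G` with parts `A, B, C`: each part is turned
into a clique and new vertices `r_A = Sum.inr 0`, `r_B = Sum.inr 1`, `r_C = Sum.inr 2` are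
adjacent exactly to the vertices of `A`, `B`, `C` respectively. -/
def Gpp {V : Type*} (G : SimpleGraph V) (A B C : Set V) : SimpleGraph (V ⊕ Fin 3) :=
  SimpleGraph.fromRel fun a b =>
    match a, b with
    | Sum.inl u, Sum.inl v =>
        G.Adj u v ∨ (u ∈ A ∧ v ∈ A) ∨ (u ∈ B ∧ v ∈ B) ∨ (u ∈ C ∧ v ∈ C)
    | Sum.inl u, Sum.inr i => (i = 0 ∧ u ∈ A) ∨ (i = 1 ∧ u ∈ B) ∨ (i = 2 ∧ u ∈ C)
    | _, _ => False

/-- For a tripartite graph `G` with independent parts `A, B, C` and the graph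
`G''` described above, a set `U ⊆ A ∪ B ∪ C` is a vertex cover of `G` if and only if no path of
`G'' − U` connects two distinct vertices of `{r_A, r_B, r_C}`. -/
theorem stmt13 {V : Type*} (G : SimpleGraph V) (A B C : Set V)
    (hcov : A ∪ B ∪ C = Set.univ)
    (hAB : Disjoint A B) (hAC : Disjoint A C) (hBC : Disjoint B C)
    (hA : A.Pairwise fun u v => ¬ G.Adj u v)
    (hB : B.Pairwise fun u v => ¬ G.Adj u v)
    (hC : C.Pairwise fun u v => ¬ G.Adj u v)
    (U : Set V) (hU : U ⊆ A ∪ B ∪ C) :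
    (∀ u v : V, G.Adj u v → u ∈ U ∨ v ∈ U) ↔
      (∀ a b : ↥((Sum.inl '' U : Set (V ⊕ Fin 3))ᶜ),
        (∃ i : Fin 3, (a : V ⊕ Fin 3) = Sum.inr i) → (∃ j : Fin 3, (b : V ⊕ Fin 3) = Sum.inr j) →
        a ≠ b → ¬ ((Gpp G A B C).induce (Sum.inl '' U : Set (V ⊕ Fin 3))ᶜ).Reachable a b) := by
  classical
  set S : Set (V ⊕ Fin 3) := (Sum.inl '' U)ᶜ with hSdef
  constructor
  · rintro hvc a b ⟨i, hi⟩ ⟨j, hj⟩ hab hreach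
    set color : V ⊕ Fin 3 → Fin 3 := fun x =>
      match x with
      | Sum.inl u => if u ∈ A then 0 else if u ∈ B then 1 else 2
      | Sum.inr i => i with hcolor
    have key : ∀ x y : V ⊕ Fin 3, x ∈ S → y ∈ S → (Gpp G A B C).Adj x y →
        color x = color y := by
      intro x y hx hy hadj
      rw [Gpp, SimpleGraph.fromRel_adj] at hadj
      obtain ⟨hne, hrel⟩ := hadj
      have colA : ∀ w : V, w ∈ A → color (Sum.inl w) = 0 := by
        intro w hw; simp [hcolor, hw]
      have colB : ∀ w : V, w ∈ B → color (Sum.inl w) = 1 := by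
        intro w hw
        have : w ∉ A := fun h => (Set.disjoint_left.mp hAB h) hw
        simp [hcolor, hw, this]
      have colC : ∀ w : V, w ∈ C → color (Sum.inl w) = 2 := by
        intro w hw
        have h1 : w ∉ A := fun h => (Set.disjoint_left.mp hAC h) hw
        have h2 : w ∉ B := fun h => (Set.disjoint_left.mp hBC h) hw
        simp [hcolor, hw, h1, h2]
      match x, y with
      | Sum.inl u, Sum.inl v =>
        have hu : u ∉ U := by simpa [hSdef] using hx
        have hv : v ∉ U := by simpa [hSdef] using hy
        have hnoadj : ¬ G.Adj u v := fun h => by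
          rcases hvc u v h with h' | h' <;> simp_all
        have hnoadj' : ¬ G.Adj v u := fun h => hnoadj h.symm
        rcases hrel with h' | h' <;>
        · rcases h' with h' | h' | h' | h' <;>
            first
              | exact absurd h' (by assumption)
              | (rw [colA _ h'.1, colA _ h'.2])
              | (rw [colB _ h'.1, colB _ h'.2])
              | (rw [colC _ h'.1, colC _ h'.2])
      | Sum.inl u, Sum.inr i =>
        rcases hrel with h' | h'
        · rcases h' with ⟨h1, h2⟩ | ⟨h1, h2⟩ | ⟨h1, h2⟩ <;> subst h1
          · rw [colA _ h2]
          · rw [colB _ h2]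
          · rw [colC _ h2]
        · exact absurd h' (by simp)
      | Sum.inr i, Sum.inl u =>
        rcases hrel with h' | h'
        · exact absurd h' (by simp)
        · rcases h' with ⟨h1, h2⟩ | ⟨h1, h2⟩ | ⟨h1, h2⟩ <;> subst h1
          · rw [colA _ h2]
          · rw [colB _ h2]
          · rw [colC _ h2]
      | Sum.inr i, Sum.inr j =>
        rcases hrel with h' | h' <;> exact absurd h' (by simp)
    have hwalk : ∀ (x y : ↥S), ((Gpp G A B C).induce S).Walk x y →
        color ↑x = color ↑y := by
      intro x y p
      induction p with
      | nil => rfl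
      | @cons x y z h p ih => exact (key ↑x ↑y x.2 y.2 h).trans ih
    have hcc := hwalk a b hreach.some
    rw [hi, hj] at hcc
    exact hab (Subtype.ext (by rw [hi, hj, show (i : Fin 3) = j from hcc]))
  · intro h u v huv
    by_contra hcon
    push_neg at hcon
    obtain ⟨hu, hv⟩ := hcon
    have hne : u ≠ v := huv.ne
    have main : ∀ (i j : Fin 3) (u v : V), i ≠ j → u ∉ U → v ∉ U →
        ((i = 0 ∧ u ∈ A) ∨ (i = 1 ∧ u ∈ B) ∨ (i = 2 ∧ u ∈ C)) →
        ((j = 0 ∧ v ∈ A) ∨ (j = 1 ∧ v ∈ B) ∨ (j = 2 ∧ v ∈ C)) →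
        G.Adj u v → False := by
      intro i j u v hij hu hv hrelu hrelv hadj
      have hmi : (Sum.inr i : V ⊕ Fin 3) ∈ S := by simp [hSdef]
      have hmj : (Sum.inr j : V ⊕ Fin 3) ∈ S := by simp [hSdef]
      have hmu : (Sum.inl u : V ⊕ Fin 3) ∈ S := by simp [hSdef, hu]
      have hmv : (Sum.inl v : V ⊕ Fin 3) ∈ S := by simp [hSdef, hv]
      refine h ⟨Sum.inr i, hmi⟩ ⟨Sum.inr j, hmj⟩ ⟨i, rfl⟩ ⟨j, rfl⟩
        (by simp [Subtype.ext_iff]; exact hij) ?_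
      have a1 : (Gpp G A B C).Adj (Sum.inr i) (Sum.inl u) := by
        rw [Gpp, SimpleGraph.fromRel_adj]
        exact ⟨by simp, Or.inr hrelu⟩
      have a2 : (Gpp G A B C).Adj (Sum.inl u) (Sum.inl v) := by
        rw [Gpp, SimpleGraph.fromRel_adj]
        exact ⟨by simp [hadj.ne], Or.inl (Or.inl hadj)⟩
      have a3 : (Gpp G A B C).Adj (Sum.inl v) (Sum.inr j) := by
        rw [Gpp, SimpleGraph.fromRel_adj]
        exact ⟨by simp, Or.inl hrelv⟩
      have h1 : ((Gpp G A B C).induce S).Adj ⟨Sum.inr i, hmi⟩ ⟨Sum.inl u, hmu⟩ := a1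
      have h2 : ((Gpp G A B C).induce S).Adj ⟨Sum.inl u, hmu⟩ ⟨Sum.inl v, hmv⟩ := a2
      have h3 : ((Gpp G A B C).induce S).Adj ⟨Sum.inl v, hmv⟩ ⟨Sum.inr j, hmj⟩ := a3
      exact (h1.reachable.trans h2.reachable).trans h3.reachable
    have hu3 : u ∈ A ∪ B ∪ C := by rw [hcov]; trivial
    have hv3 : v ∈ A ∪ B ∪ C := by rw [hcov]; trivial
    rcases hu3 with (huA | huB) | huC <;> rcases hv3 with (hvA | hvB) | hvC
    · exact hA huA hvA hne huv
    · exact main 0 1 u v (by decide) hu hv (Or.inl ⟨rfl, huA⟩) (Or.inr (Or.inl ⟨rfl, hvB⟩)) huv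
    · exact main 0 2 u v (by decide) hu hv (Or.inl ⟨rfl, huA⟩) (Or.inr (Or.inr ⟨rfl, hvC⟩)) huv
    · exact main 1 0 u v (by decide) hu hv (Or.inr (Or.inl ⟨rfl, huB⟩)) (Or.inl ⟨rfl, hvA⟩) huv
    · exact hB huB hvB hne huv
    · exact main 1 2 u v (by decide) hu hv (Or.inr (Or.inl ⟨rfl, huB⟩)) (Or.inr (Or.inr ⟨rfl, hvC⟩)) huv
    · exact main 2 0 u v (by decide) hu hv (Or.inr (Or.inr ⟨rfl, huC⟩)) (Or.inl ⟨rfl, hvA⟩) huv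
    · exact main 2 1 u v (by decide) hu hv (Or.inr (Or.inr ⟨rfl, huC⟩)) (Or.inr (Or.inl ⟨rfl, hvB⟩)) huv
    · exact hC huC hvC hne huv
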